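/- For an oriented graph G^σ of a graph G with n vertices and maximum degree Δ, the skew energy satisfies E_S(G^σ) ≤ n√Δ, and equality holds if and only if S(G^σ)^T S(G^σ) = Δ I_n. -/

import Mathlib

open Matrix Polynomial

/-- The skew energy: the sum of the norms of the eigenvalues (with multiplicity). -/
noncomputable def skewEnergy {V : Type*} [Fintype V] [DecidableEq V]
    (S : Matrix V V ℝ) : ℝ :=
  (((S.map Complex.ofReal).charpoly.roots).map (fun z => ‖z‖)).sum

lemma charpoly_diagonal' {R : Type*} [CommRing R] {n : ℕ} (d : Fin n → R) :
    (Matrix.diagonal d).charpoly = ∏ i, (X - C (d i)) := by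
  have h : charmatrix (Matrix.diagonal d) = Matrix.diagonal (fun i => X - C (d i)) := by
    ext i j
    rcases eq_or_ne i j with rfl | hij
    · simp [charmatrix_apply_eq]
    · simp [charmatrix_apply_ne _ _ _ hij, Matrix.diagonal_apply_ne _ hij]
  rw [Matrix.charpoly, h, Matrix.det_diagonal]

lemma charpoly_conj' {R : Type*} [CommRing R] {n : ℕ} (U D V : Matrix (Fin n) (Fin n) R)
    (hUV : U * V = 1) : (U * D * V).charpoly = D.charpoly := by
  classical
  set f := (C : R →+* R[X])
  have hmap : ∀ M N : Matrix (Fin n) (Fin n) R, (M * N).map f = M.map f * N.map f :=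
    fun M N => Matrix.map_mul
  have hc : charmatrix (U * D * V) = U.map f * charmatrix D * V.map f := by
    rw [charmatrix]
    rw [charmatrix]
    rw [Matrix.mul_sub, Matrix.sub_mul]
    congr 1
    · have : (Matrix.scalar (Fin n)) (X : R[X]) = (X : R[X]) • (1 : Matrix (Fin n) (Fin n) R[X]) := by
        simp [Matrix.scalar, Matrix.smul_one_eq_diagonal]
      rw [this, Matrix.mul_smul, Matrix.smul_mul, mul_one, ← hmap, hUV]
      simp [Matrix.smul_one_eq_diagonal]
    · show (RingHom.mapMatrix f) (U * D * V) = _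
      simp [RingHom.mapMatrix_apply, hmap]; rfl
  rw [Matrix.charpoly, Matrix.charpoly, hc, Matrix.det_mul, Matrix.det_mul]
  have h1 : (U.map f).det * (V.map f).det = 1 := by
    rw [← Matrix.det_mul, ← hmap, hUV]; simp
  rw [mul_comm (U.map f).det, mul_assoc, h1, mul_one]

theorem skewEnergy_le_optimum {n : ℕ} (G : SimpleGraph (Fin n)) [DecidableRel G.Adj]
    (S : Matrix (Fin n) (Fin n) ℝ) (hskew : Sᵀ = -S)
    (hadj : ∀ i j, G.Adj i j → S i j = 1 ∨ S i j = -1)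
    (hnadj : ∀ i j, ¬ G.Adj i j → S i j = 0) :
    skewEnergy S ≤ (n : ℝ) * Real.sqrt (G.maxDegree) ∧
    (skewEnergy S = (n : ℝ) * Real.sqrt (G.maxDegree) ↔
      Sᵀ * S = (G.maxDegree : ℝ) • (1 : Matrix (Fin n) (Fin n) ℝ)) := by
  classical
  set Δ : ℕ := G.maxDegree with hΔdef
  set A : Matrix (Fin n) (Fin n) ℂ := S.map Complex.ofReal with hAdef
  have hAstar : Aᴴ = -A := by
    ext i j
    simp only [conjTranspose_apply, hAdef, Matrix.map_apply, Matrix.neg_apply]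
    rw [show S j i = Sᵀ i j from rfl, hskew]
    simp
  set B : Matrix (Fin n) (Fin n) ℂ := Complex.I • A with hBdef
  have hB : B.IsHermitian := by
    rw [Matrix.IsHermitian, hBdef, Matrix.conjTranspose_smul, hAstar]
    simp [Complex.conj_I]
  set μ : Fin n → ℝ := hB.eigenvalues with hμdef
  set U : Matrix (Fin n) (Fin n) ℂ := (hB.eigenvectorUnitary : Matrix (Fin n) (Fin n) ℂ) with hUdef
  have hUU : U * star U = 1 := (Matrix.mem_unitaryGroup_iff).mp (hB.eigenvectorUnitary).2
  have hUU' : star U * U = 1 := (Matrix.mem_unitaryGroup_iff').mp (hB.eigenvectorUnitary).2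
  set D : Matrix (Fin n) (Fin n) ℂ := Matrix.diagonal (Complex.ofReal ∘ μ) with hDdef
  have hspec : B = U * D * star U := hB.spectral_theorem
  have hAspec : A = U * Matrix.diagonal (fun i => -Complex.I * (μ i : ℂ)) * star U := by
    have hab : A = (-Complex.I) • B := by
      rw [hBdef, smul_smul]
      simp [Complex.I_mul_I]
    rw [hab, hspec]
    rw [show (U * diagonal fun i => -Complex.I * (μ i : ℂ)) = U * ((-Complex.I) • D) by
      rw [hDdef, ← Matrix.diagonal_smul]; rfl]
    rw [Matrix.mul_smul, Matrix.smul_mul]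
  -- skew energy = sum of |μ i|
  have hE : skewEnergy S = ∑ i, |μ i| := by
    have hcp : A.charpoly = ∏ i, (X - C (-Complex.I * (μ i : ℂ))) := by
      rw [hAspec, charpoly_conj' _ _ _ hUU, charpoly_diagonal']
    have hroots : A.charpoly.roots = (Finset.univ.val.map fun i => -Complex.I * (μ i : ℂ)) := by
      rw [hcp]
      rw [show (∏ i, (X - C (-Complex.I * (μ i : ℂ)))) =
          ((Finset.univ.val.map fun i => -Complex.I * (μ i : ℂ)).map fun a => X - C a).prod by
        rw [Multiset.map_map]; rfl]
      exact roots_multiset_prod_X_sub_C _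
    rw [skewEnergy, ← hAdef, hroots, Multiset.map_map]
    rw [show ∑ i, |μ i| = ∑ i, ‖(-Complex.I * (μ i : ℂ))‖ by
      refine Finset.sum_congr rfl fun i _ => ?_
      simp [Complex.norm_real]]
    rfl
  -- trace identity : ∑ μ i ^ 2 = trace (Sᵀ * S)
  have hBB : B * B = (Sᵀ * S).map Complex.ofReal := by
    have : B * B = -(A * A) := by
      rw [hBdef, Matrix.smul_mul, Matrix.mul_smul, smul_smul, Complex.I_mul_I, neg_one_smul]
    rw [this, hskew, Matrix.neg_mul]
    ext i j
    push_cast [hAdef, Matrix.neg_apply, Matrix.mul_apply, Matrix.map_apply]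
    ring
  have htr : ∑ i, μ i ^ 2 = Matrix.trace (Sᵀ * S) := by
    have h1 : Matrix.trace (B * B) = ∑ i, ((μ i : ℂ)) ^ 2 := by
      rw [hspec]
      rw [show U * D * star U * (U * D * star U) = U * (D * ((star U * U) * (D * star U))) by
        noncomm_ring]
      rw [hUU', one_mul, ← Matrix.mul_assoc, ← Matrix.mul_assoc]
      rw [Matrix.trace_mul_cycle, ← Matrix.mul_assoc, hUU', one_mul]
      rw [hDdef, Matrix.diagonal_mul_diagonal, Matrix.trace_diagonal]
      simp [sq]
    have h2 : Matrix.trace (B * B) = ((Matrix.trace (Sᵀ * S) : ℝ) : ℂ) := by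
      rw [hBB, Matrix.trace]
      simp [Matrix.trace, Matrix.diag, Matrix.map_apply]
    rw [h1] at h2
    exact_mod_cast h2
  -- trace (Sᵀ * S) = ∑ degrees
  have hrow : ∀ j, ∑ i, S j i ^ 2 = (G.degree j : ℝ) := by
    intro j
    have : ∀ i, S j i ^ 2 = if G.Adj j i then (1 : ℝ) else 0 := by
      intro i
      by_cases h : G.Adj j i
      · rcases hadj j i h with h1 | h1 <;> simp [h1, h]
      · simp [hnadj j i h, h]
    rw [Finset.sum_congr rfl fun i _ => this i, Finset.sum_boole]
    congr 1
    rw [SimpleGraph.degree, SimpleGraph.neighborFinset_eq_filter]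
  have htr2 : Matrix.trace (Sᵀ * S) = ∑ j, (G.degree j : ℝ) := by
    have h1 : Matrix.trace (Sᵀ * S) = ∑ i, ∑ j, S j i ^ 2 := by
      rw [Matrix.trace]
      refine Finset.sum_congr rfl fun i _ => ?_
      simp [Matrix.diag, Matrix.mul_apply, Matrix.transpose_apply, sq]
    rw [h1, Finset.sum_comm]
    exact Finset.sum_congr rfl fun j _ => hrow j
  have htrle : Matrix.trace (Sᵀ * S) ≤ (n : ℝ) * Δ := by
    rw [htr2]
    calc ∑ j, (G.degree j : ℝ) ≤ ∑ _j : Fin n, (Δ : ℝ) := by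
          refine Finset.sum_le_sum fun j _ => ?_
          exact_mod_cast G.degree_le_maxDegree j
      _ = (n : ℝ) * Δ := by simp [mul_comm]
  have hΔ0 : (0:ℝ) ≤ (Δ:ℝ) := Nat.cast_nonneg _
  set c : ℝ := Real.sqrt (Δ:ℝ) with hcdef
  have hc0 : 0 ≤ c := Real.sqrt_nonneg _
  have hcc : c * c = (Δ:ℝ) := Real.mul_self_sqrt hΔ0
  have hEnn : 0 ≤ ∑ i, |μ i| := Finset.sum_nonneg fun i _ => abs_nonneg _
  have hsum2 : ∑ i, |μ i| ^ 2 = Matrix.trace (Sᵀ * S) := by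
    rw [← htr]; exact Finset.sum_congr rfl fun i _ => sq_abs _
  have hCS : (∑ i, |μ i|) ^ 2 ≤ (n:ℝ) * ∑ i, |μ i| ^ 2 := by
    have := sq_sum_le_card_mul_sum_sq (s := Finset.univ) (f := fun i : Fin n => |μ i|)
    simpa using this
  -- the inequality
  have hineq : skewEnergy S ≤ (n : ℝ) * c := by
    rw [hE]
    have h1 : (∑ i, |μ i|) ^ 2 ≤ ((n:ℝ) * c) ^ 2 := by
      have : ((n:ℝ) * c) ^ 2 = (n:ℝ) * ((n:ℝ) * (Δ:ℝ)) := by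
        rw [mul_pow, sq, sq, hcc]; ring
      rw [this]
      calc (∑ i, |μ i|) ^ 2 ≤ (n:ℝ) * ∑ i, |μ i| ^ 2 := hCS
        _ ≤ (n:ℝ) * ((n:ℝ) * (Δ:ℝ)) := by
            refine mul_le_mul_of_nonneg_left ?_ (Nat.cast_nonneg n)
            rw [hsum2]; exact htrle
    have h2 : 0 ≤ (n:ℝ) * c := by positivity
    calc ∑ i, |μ i| = Real.sqrt ((∑ i, |μ i|) ^ 2) := (Real.sqrt_sq hEnn).symm
      _ ≤ Real.sqrt (((n:ℝ) * c) ^ 2) := Real.sqrt_le_sqrt h1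
      _ = (n:ℝ) * c := Real.sqrt_sq h2
  refine ⟨hineq, ?_, ?_⟩
  · -- equality implies SᵀS = Δ • 1
    intro h
    have hsum : ∑ i, |μ i| = (n:ℝ) * c := by rw [← hE]; exact h
    have hs2 : ∑ i, |μ i| ^ 2 = (n:ℝ) * (Δ:ℝ) := by
      rcases Nat.eq_zero_or_pos n with h0 | h0
      · subst h0; simp
      · have hn' : (0:ℝ) < n := by exact_mod_cast h0
        have hle : ∑ i, |μ i| ^ 2 ≤ (n:ℝ) * (Δ:ℝ) := hsum2 ▸ htrle
        have hge : (n:ℝ) * ((n:ℝ) * (Δ:ℝ)) ≤ (n:ℝ) * ∑ i, |μ i| ^ 2 := by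
          calc (n:ℝ) * ((n:ℝ) * (Δ:ℝ)) = ((n:ℝ) * c) ^ 2 := by rw [mul_pow, sq, sq, hcc]; ring
            _ = (∑ i, |μ i|) ^ 2 := by rw [hsum]
            _ ≤ (n:ℝ) * ∑ i, |μ i| ^ 2 := hCS
        have := le_of_mul_le_mul_left hge hn'
        linarith
    have hzero : ∑ i, (|μ i| - c) ^ 2 = 0 := by
      have hexp : ∑ i, (|μ i| - c) ^ 2
          = ∑ i, |μ i| ^ 2 - 2 * c * ∑ i, |μ i| + (n:ℝ) * (c * c) := by
        rw [Finset.mul_sum]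
        rw [show (n:ℝ) * (c * c) = ∑ _i : Fin n, c * c by
          rw [Finset.sum_const]; simp [mul_comm]]
        rw [← Finset.sum_sub_distrib, ← Finset.sum_add_distrib]
        exact Finset.sum_congr rfl fun i _ => by ring
      rw [hexp, hs2, hsum]
      nlinarith [hcc]
    have hall : ∀ i, |μ i| = c := by
      intro i
      have h1 : ∀ i ∈ Finset.univ, (0:ℝ) ≤ (|μ i| - c) ^ 2 := fun i _ => sq_nonneg _
      have := (Finset.sum_eq_zero_iff_of_nonneg h1).mp hzero i (Finset.mem_univ i)
      have := sq_eq_zero_iff.mp this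
      linarith
    have hμsq : ∀ i, μ i ^ 2 = (Δ:ℝ) := fun i => by
      rw [← sq_abs, hall i, sq, hcc]
    have hDD : D * D = ((Δ:ℝ) : ℂ) • (1 : Matrix (Fin n) (Fin n) ℂ) := by
      rw [hDdef, Matrix.diagonal_mul_diagonal, Matrix.smul_one_eq_diagonal]
      refine congrArg Matrix.diagonal (funext fun i => ?_)
      show ((μ i : ℂ)) * ((μ i : ℂ)) = ((Δ:ℝ) : ℂ)
      rw [← Complex.ofReal_mul, ← sq, hμsq i]
    have hBBΔ : B * B = ((Δ:ℝ) : ℂ) • (1 : Matrix (Fin n) (Fin n) ℂ) := by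
      rw [hspec]
      rw [show U * D * star U * (U * D * star U) = U * (D * ((star U * U) * (D * star U))) by
        noncomm_ring]
      rw [hUU', one_mul, ← Matrix.mul_assoc D D (star U), hDD]
      rw [Matrix.smul_mul, one_mul, Matrix.mul_smul, hUU]
    have hmap : (Sᵀ * S).map Complex.ofReal
        = ((Δ:ℝ) • (1 : Matrix (Fin n) (Fin n) ℝ)).map Complex.ofReal := by
      rw [← hBB, hBBΔ]
      ext i j
      rcases eq_or_ne i j with rfl | hij
      · simp [Matrix.map_apply, Matrix.one_apply]
      · simp [Matrix.map_apply, Matrix.one_apply_ne hij]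
    ext i j
    have h9 : ((Sᵀ * S).map Complex.ofReal) i j
        = (((Δ:ℝ) • (1 : Matrix (Fin n) (Fin n) ℝ)).map Complex.ofReal) i j := by rw [hmap]
    simp only [Matrix.map_apply] at h9
    exact Complex.ofReal_inj.mp h9
  · -- SᵀS = Δ • 1 implies equality
    intro hm
    have hBBΔ : B * B = ((Δ:ℝ) : ℂ) • (1 : Matrix (Fin n) (Fin n) ℂ) := by
      rw [hBB, hm]
      ext i j
      rcases eq_or_ne i j with rfl | hij
      · simp [Matrix.map_apply, Matrix.one_apply]
      · simp [Matrix.map_apply, Matrix.one_apply_ne hij]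
    have hDspec : D = star U * B * U := by
      rw [hspec]
      rw [show star U * (U * D * star U) * U = (star U * U) * D * (star U * U) by noncomm_ring]
      rw [hUU', one_mul, mul_one]
    have hDD : D * D = ((Δ:ℝ) : ℂ) • (1 : Matrix (Fin n) (Fin n) ℂ) := by
      rw [hDspec]
      rw [show star U * B * U * (star U * B * U) = star U * (B * ((U * star U) * (B * U))) by
        noncomm_ring]
      rw [hUU, one_mul, ← Matrix.mul_assoc B B U, hBBΔ]
      rw [Matrix.smul_mul, one_mul, Matrix.mul_smul, hUU']
    have hμsq : ∀ i, μ i ^ 2 = (Δ:ℝ) := by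
      intro i
      have h1 : (D * D) i i = (((Δ:ℝ) : ℂ) • (1 : Matrix (Fin n) (Fin n) ℂ)) i i := by rw [hDD]
      rw [hDdef] at h1
      simp only [Matrix.diagonal_mul_diagonal] at h1
      rw [Matrix.diagonal_apply_eq] at h1
      have h2 : ((μ i : ℂ)) * (μ i : ℂ) = ((Δ:ℝ) : ℂ) := by
        simpa [Matrix.smul_apply, Matrix.one_apply] using h1
      have h3 : ((μ i * μ i : ℝ) : ℂ) = ((Δ:ℝ) : ℂ) := by push_cast; exact h2
      have h4 : μ i * μ i = (Δ:ℝ) := Complex.ofReal_inj.mp h3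
      rw [sq]; exact h4
    rw [hE]
    have : ∀ i, |μ i| = c := by
      intro i
      rw [hcdef, ← hμsq i, Real.sqrt_sq_eq_abs]
    rw [Finset.sum_congr rfl fun i _ => this i, Finset.sum_const]
    simp [mul_comm]
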